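/- Let a, b ∈ ℝ^d be two independent random vectors with i.i.d. coordinates each distributed as a product of an independent Bernoulli(s/d) and a N(0, 1/s) Gaussian. Let C² = 2c³/√(c² - 1) for some c > 1. Then for all t with 0 ≤ t ≤ C²s/d, P[|⟨a, b⟩| ≥ t] ≤ 2·exp(-dt²/(2C²)), and for t > C²s/d, P[|⟨a, b⟩| ≥ t] ≤ 2·exp(-st/2). -/

import Mathlib

open MeasureTheory ProbabilityTheory

/-- The common coordinate distribution: `0` with probability `1 - s/d`, otherwise
`N(0, 1/s)`. -/
noncomputable def sparseGaussianMix (s d : ℕ) : Measure ℝ :=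
  ENNReal.ofReal (1 - (s : ℝ) / d) • Measure.dirac (0 : ℝ) +
    ENNReal.ofReal ((s : ℝ) / d) • gaussianReal 0 (Real.toNNReal (1 / s))

namespace Stmt6Aux

open Real
open scoped NNReal ENNReal


lemma gauss_linear (v : ℝ≥0) (hv : v ≠ 0) (c : ℝ) :
    ∫⁻ y, ENNReal.ofReal (Real.exp (c * y)) ∂(gaussianReal 0 v) =
      ENNReal.ofReal (Real.exp (c ^ 2 * v / 2)) := by
  have hv0 : (0:ℝ) < v := lt_of_le_of_ne v.coe_nonneg (by exact_mod_cast hv.symm)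
  rw [gaussianReal_of_var_ne_zero _ hv,
    lintegral_withDensity_eq_lintegral_mul _ (measurable_gaussianPDF _ _)
      (by fun_prop)]
  have hpt : ∀ y : ℝ, (gaussianPDF 0 v * fun y => ENNReal.ofReal (Real.exp (c * y))) y
      = ENNReal.ofReal (Real.exp (c ^ 2 * v / 2) * gaussianPDFReal (c * v) v y) := by
    intro y
    simp only [Pi.mul_apply, gaussianPDF]
    rw [← ENNReal.ofReal_mul (gaussianPDFReal_nonneg _ _ _)]
    congr 1
    unfold gaussianPDFReal
    rw [mul_assoc, ← Real.exp_add, mul_left_comm, ← Real.exp_add]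
    congr 1
    rw [Real.exp_eq_exp]
    field_simp
    ring
  simp only [hpt]
  rw [← ofReal_integral_eq_lintegral_ofReal
      ((integrable_gaussianPDFReal _ _).const_mul _)
      (ae_of_all _ fun y => mul_nonneg (Real.exp_pos _).le (gaussianPDFReal_nonneg _ _ _))]
  rw [integral_const_mul, integral_gaussianPDFReal_eq_one _ hv, mul_one]

lemma gauss_sq (v : ℝ≥0) (hv : v ≠ 0) (θ : ℝ) (hθ : 2 * θ * (v:ℝ) < 1) :
    ∫⁻ y, ENNReal.ofReal (Real.exp (θ * y ^ 2)) ∂(gaussianReal 0 v) =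
      ENNReal.ofReal (Real.sqrt (1 - 2 * θ * v))⁻¹ := by
  have hv0 : (0:ℝ) < v := lt_of_le_of_ne v.coe_nonneg (by exact_mod_cast hv.symm)
  have hb : (0:ℝ) < (1 - 2 * θ * v) / (2 * v) := by
    apply div_pos (by linarith) (by positivity)
  rw [gaussianReal_of_var_ne_zero _ hv,
    lintegral_withDensity_eq_lintegral_mul _ (measurable_gaussianPDF _ _)
      (by fun_prop)]
  have hpt : ∀ y : ℝ, (gaussianPDF 0 v * fun y => ENNReal.ofReal (Real.exp (θ * y ^ 2))) y
      = ENNReal.ofReal ((Real.sqrt (2 * π * v))⁻¹ *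
          Real.exp (-((1 - 2 * θ * v) / (2 * v)) * y ^ 2)) := by
    intro y
    simp only [Pi.mul_apply, gaussianPDF]
    rw [← ENNReal.ofReal_mul (gaussianPDFReal_nonneg _ _ _)]
    congr 1
    unfold gaussianPDFReal
    rw [mul_assoc, ← Real.exp_add]
    congr 2
    field_simp
    ring
  simp only [hpt]
  rw [← ofReal_integral_eq_lintegral_ofReal
      (((integrable_exp_neg_mul_sq hb).const_mul _))
      (ae_of_all _ fun y => by positivity)]
  congr 1
  rw [integral_const_mul, integral_gaussian]
  have h2 : π / ((1 - 2 * θ * v) / (2 * v)) = (2 * π * v) / (1 - 2 * θ * v) := by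
    rw [div_div_eq_mul_div]; ring_nf
  rw [h2, Real.sqrt_div (by positivity : (0:ℝ) ≤ 2 * π * v) _]
  have hs : Real.sqrt (2 * π * v) ≠ 0 := by positivity
  field_simp


variable {s d : ℕ}

lemma mix_univ (hs : 1 ≤ s) (hsd : s ≤ d) : sparseGaussianMix s d Set.univ = 1 := by
  have hd : (0:ℝ) < d := by exact_mod_cast lt_of_lt_of_le (Nat.lt_of_lt_of_le Nat.zero_lt_one hs) hsd
  have hp0 : (0:ℝ) ≤ (s:ℝ)/d := by positivity
  have hp1 : (s:ℝ)/d ≤ 1 := by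
    rw [div_le_one hd]; exact_mod_cast hsd
  simp only [sparseGaussianMix, Measure.add_apply, Measure.smul_apply, smul_eq_mul]
  rw [measure_univ, measure_univ, mul_one, mul_one,
    ← ENNReal.ofReal_add (by linarith) hp0]
  norm_num

instance : ∀ (s d : ℕ), SFinite (sparseGaussianMix s d) := fun s d => by
  unfold sparseGaussianMix; infer_instance

lemma isProb_mix (hs : 1 ≤ s) (hsd : s ≤ d) : IsProbabilityMeasure (sparseGaussianMix s d) :=
  ⟨mix_univ hs hsd⟩

lemma lintegral_mix (hs : 1 ≤ s) (f : ℝ → ℝ≥0∞) (hf : Measurable f) :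
    ∫⁻ x, f x ∂(sparseGaussianMix s d) =
      ENNReal.ofReal (1 - (s:ℝ)/d) * f 0 +
        ENNReal.ofReal ((s:ℝ)/d) * ∫⁻ x, f x ∂(gaussianReal 0 (Real.toNNReal (1 / s))) := by
  rw [sparseGaussianMix, lintegral_add_measure, lintegral_smul_measure, lintegral_smul_measure,
    lintegral_dirac' _ hf]
  simp only [smul_eq_mul]

lemma pair_lintegral (hs : 1 ≤ s) (hsd : s ≤ d) (lam : ℝ)
    (hlam : lam ^ 2 ≤ (16/25) * (s:ℝ) ^ 2) :
    ∫⁻ z : ℝ × ℝ, ENNReal.ofReal (Real.exp (lam * (z.1 * z.2)))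
        ∂((sparseGaussianMix s d).prod (sparseGaussianMix s d)) =
      ENNReal.ofReal (1 - ((s:ℝ)/d) ^ 2 +
        ((s:ℝ)/d) ^ 2 * (Real.sqrt (1 - lam ^ 2 / (s:ℝ) ^ 2))⁻¹) := by
  have hs0 : (0:ℝ) < s := by exact_mod_cast hs
  have hd : (0:ℝ) < d := by
    exact_mod_cast lt_of_lt_of_le (Nat.lt_of_lt_of_le Nat.zero_lt_one hs) hsd
  have hvr : ((Real.toNNReal (1 / (s:ℝ))):ℝ) = 1 / s := Real.coe_toNNReal _ (by positivity)
  have hv : Real.toNNReal (1 / (s:ℝ)) ≠ 0 := by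
    intro h
    rw [h] at hvr
    simp at hvr
    exact absurd hvr (by positivity)
  set p : ℝ := (s:ℝ)/d with hp_def
  have hp0 : (0:ℝ) ≤ p := by positivity
  have hp1 : p ≤ 1 := by rw [hp_def, div_le_one hd]; exact_mod_cast hsd
  haveI := isProb_mix hs hsd
  rw [lintegral_prod _ (by fun_prop)]
  -- inner integral
  have hinner : ∀ x : ℝ, ∫⁻ y, ENNReal.ofReal (Real.exp (lam * (x * y)))
        ∂(sparseGaussianMix s d)
      = ENNReal.ofReal (1 - p) +
        ENNReal.ofReal p * ENNReal.ofReal (Real.exp ((lam ^ 2 * (Real.toNNReal (1 / (s:ℝ))) / 2) * x ^ 2)) := by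
    intro x
    have : ∀ y : ℝ, lam * (x * y) = (lam * x) * y := fun y => by ring
    simp only [this]
    rw [lintegral_mix hs _ (by fun_prop), gauss_linear _ hv (lam * x)]
    congr 2
    · rw [mul_zero, Real.exp_zero, ENNReal.ofReal_one, mul_one]
    · congr 1; ring
  simp only [hinner]
  have hθv : 2 * (lam ^ 2 * (Real.toNNReal (1 / (s:ℝ))) / 2) * ((Real.toNNReal (1 / (s:ℝ))):ℝ) < 1 := by
    have : lam ^ 2 * ((Real.toNNReal (1 / (s:ℝ))):ℝ) * (Real.toNNReal (1 / (s:ℝ))) ≤ 16/25 := by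
      rw [hvr]
      calc lam ^ 2 * (1/(s:ℝ)) * (1/s) ≤ (16/25) * s^2 * (1/s) * (1/s) := by
            apply mul_le_mul_of_nonneg_right (mul_le_mul_of_nonneg_right hlam (by positivity))
              (by positivity)
        _ = 16/25 := by field_simp
    linarith
  rw [lintegral_add_right _ (by fun_prop), lintegral_const, measure_univ, mul_one,
    lintegral_const_mul _ (by fun_prop),
    lintegral_mix hs _ (by fun_prop), gauss_sq _ hv _ hθv]
  have h0 : ENNReal.ofReal (Real.exp (lam ^ 2 * ((Real.toNNReal (1 / (s:ℝ))):ℝ) / 2 * (0:ℝ) ^ 2)) = 1 := by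
    norm_num
  rw [h0, mul_one]
  have hvv : 1 - 2 * (lam ^ 2 * ((Real.toNNReal (1 / (s:ℝ))):ℝ) / 2) * (Real.toNNReal (1 / (s:ℝ))) = 1 - lam ^ 2 / (s:ℝ) ^ 2 := by
    rw [hvr]; field_simp
  rw [hvv]
  have hI0 : (0:ℝ) ≤ (Real.sqrt (1 - lam ^ 2 / (s:ℝ) ^ 2))⁻¹ := by positivity
  have h1p : (0:ℝ) ≤ 1 - p := by linarith
  rw [← ENNReal.ofReal_mul hp0, ← ENNReal.ofReal_add h1p (by positivity),
    ← ENNReal.ofReal_mul hp0, ← ENNReal.ofReal_add h1p (by positivity)]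
  congr 1
  ring

noncomputable def termVal (s d : ℕ) (lam : ℝ) : ℝ :=
  1 - ((s:ℝ)/d) ^ 2 + ((s:ℝ)/d) ^ 2 * (Real.sqrt (1 - lam ^ 2 / (s:ℝ) ^ 2))⁻¹

lemma termVal_nonneg (hs : 1 ≤ s) (hsd : s ≤ d) (lam : ℝ) : 0 ≤ termVal s d lam := by
  have hd : (0:ℝ) < d := by
    exact_mod_cast lt_of_lt_of_le (Nat.lt_of_lt_of_le Nat.zero_lt_one hs) hsd
  have hp1 : (s:ℝ)/d ≤ 1 := by rw [div_le_one hd]; exact_mod_cast hsd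
  have hp0 : (0:ℝ) ≤ (s:ℝ)/d := by positivity
  have h1 : ((s:ℝ)/d) ^ 2 ≤ 1 := by nlinarith
  have : (0:ℝ) ≤ ((s:ℝ)/d) ^ 2 * (Real.sqrt (1 - lam ^ 2 / (s:ℝ) ^ 2))⁻¹ := by positivity
  unfold termVal
  linarith

lemma pair_integrable (hs : 1 ≤ s) (hsd : s ≤ d) (lam : ℝ)
    (hlam : lam ^ 2 ≤ (16/25) * (s:ℝ) ^ 2) :
    Integrable (fun z : ℝ × ℝ => Real.exp (lam * (z.1 * z.2)))
      ((sparseGaussianMix s d).prod (sparseGaussianMix s d)) := by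
  refine ⟨(by fun_prop : Continuous fun z : ℝ × ℝ => Real.exp (lam * (z.1 * z.2))).aestronglyMeasurable, ?_⟩
  rw [hasFiniteIntegral_iff_ofReal (ae_of_all _ fun z => (Real.exp_pos _).le),
    pair_lintegral hs hsd lam hlam]
  exact ENNReal.ofReal_lt_top

lemma term_integral {Ω : Type*} [MeasurableSpace Ω] {μ : Measure Ω} [IsProbabilityMeasure μ]
    (hs : 1 ≤ s) (hsd : s ≤ d) {A B : Ω → ℝ} (hA : Measurable A) (hB : Measurable B)
    (hmA : μ.map A = sparseGaussianMix s d) (hmB : μ.map B = sparseGaussianMix s d)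
    (hAB : IndepFun A B μ) (lam : ℝ) (hlam : lam ^ 2 ≤ (16/25) * (s:ℝ) ^ 2) :
    Integrable (fun ω => Real.exp (lam * (A ω * B ω))) μ ∧
      ∫ ω, Real.exp (lam * (A ω * B ω)) ∂μ = termVal s d lam := by
  have hmap : μ.map (fun ω => (A ω, B ω)) =
      (sparseGaussianMix s d).prod (sparseGaussianMix s d) := by
    have h := (indepFun_iff_map_prod_eq_prod_map_map hA.aemeasurable hB.aemeasurable).1 hAB
    rw [hmA, hmB] at h
    exact h
  have hcont : Continuous fun z : ℝ × ℝ => Real.exp (lam * (z.1 * z.2)) := by fun_prop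
  have hint : Integrable (fun z : ℝ × ℝ => Real.exp (lam * (z.1 * z.2)))
      (μ.map (fun ω => (A ω, B ω))) := by
    rw [hmap]; exact pair_integrable hs hsd lam hlam
  constructor
  · exact (integrable_map_measure hcont.aestronglyMeasurable (hA.prodMk hB).aemeasurable).1 hint
  · rw [← integral_map (hA.prodMk hB).aemeasurable hcont.aestronglyMeasurable, hmap,
      integral_eq_lintegral_of_nonneg_ae (ae_of_all _ fun z => (Real.exp_pos _).le)
        hcont.aestronglyMeasurable,
      pair_lintegral hs hsd lam hlam, ENNReal.toReal_ofReal]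
    · rfl
    · exact termVal_nonneg hs hsd lam

lemma iIndepFun_ae_congr {ι : Type*} {Ω : Type*} [MeasurableSpace Ω] {μ : Measure Ω}
    {β : ι → Type*} [m : ∀ i, MeasurableSpace (β i)] {f g : ∀ i, Ω → β i}
    (hfg : ∀ i, f i =ᵐ[μ] g i) (hf : iIndepFun f μ) : iIndepFun g μ := by
  rw [ProbabilityTheory.iIndepFun_iff_measure_inter_preimage_eq_mul] at hf ⊢
  intro S sets hsets
  have hae : ∀ᵐ ω ∂μ, ∀ i ∈ S, f i ω = g i ω := by
    rw [Filter.eventually_all_finset]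
    exact fun i _ => hfg i
  have h1 : μ (⋂ i ∈ S, g i ⁻¹' sets i) = μ (⋂ i ∈ S, f i ⁻¹' sets i) := by
    apply measure_congr
    rw [Filter.eventuallyEq_set]
    filter_upwards [hae] with ω hω
    simp only [Set.mem_iInter, Set.mem_preimage]
    constructor <;> intro h i hi
    · rw [hω i hi]; exact h i hi
    · rw [← hω i hi]; exact h i hi
  have h2 : ∀ i ∈ S, μ (g i ⁻¹' sets i) = μ (f i ⁻¹' sets i) := by
    intro i hi
    apply measure_congr
    rw [Filter.eventuallyEq_set]
    filter_upwards [hfg i] with ω hω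
    rw [Set.mem_preimage, Set.mem_preimage, hω]
  rw [h1, hf S hsets]
  exact (Finset.prod_congr rfl h2).symm

lemma termVal_le (hs : 1 ≤ s) (hsd : s ≤ d) (τ : ℝ) (hτ0 : 0 ≤ τ) (hτ1 : τ ≤ 1)
    (lam : ℝ) (hl : lam ^ 2 = (16/25) * τ ^ 2 * (s:ℝ) ^ 2) :
    termVal s d lam ≤ Real.exp (((s:ℝ)/d) ^ 2 * ((16/15) * τ ^ 2)) := by
  have hs0 : (0:ℝ) < s := by exact_mod_cast hs
  have hll : lam ^ 2 / (s:ℝ) ^ 2 = (16/25) * τ ^ 2 := by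
    rw [hl]; field_simp
  have hu1 : τ ^ 2 ≤ 1 := by nlinarith
  have hu0 : (0:ℝ) ≤ τ ^ 2 := sq_nonneg τ
  set w : ℝ := 1 + (16/15) * τ ^ 2 with hw_def
  have hw0 : 0 < w := by positivity
  have hprod : 1 ≤ w ^ 2 * (1 - (16/25) * τ ^ 2) := by
    have h3 : τ ^ 2 * τ ^ 2 ≤ τ ^ 2 := by nlinarith
    have h4 : τ ^ 2 * τ ^ 2 * τ ^ 2 ≤ τ ^ 2 := by nlinarith
    rw [hw_def]
    nlinarith
  have hkey : w⁻¹ ≤ Real.sqrt (1 - (16/25) * τ ^ 2) := by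
    rw [show (1:ℝ) - (16/25) * τ ^ 2 = (1 - (16/25) * τ ^ 2) from rfl]
    apply Real.le_sqrt' (by positivity) |>.2
    have hww : (w⁻¹) ^ 2 * w ^ 2 = 1 := by field_simp
    nlinarith [sq_nonneg (w⁻¹), hprod]
  have hI : (Real.sqrt (1 - lam ^ 2 / (s:ℝ) ^ 2))⁻¹ ≤ w := by
    rw [hll]
    calc (Real.sqrt (1 - (16/25) * τ ^ 2))⁻¹ ≤ (w⁻¹)⁻¹ :=
          inv_anti₀ (by positivity) hkey
      _ = w := inv_inv w
  have hp0 : (0:ℝ) ≤ ((s:ℝ)/d) ^ 2 := sq_nonneg _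
  calc termVal s d lam = 1 + ((s:ℝ)/d) ^ 2 * ((Real.sqrt (1 - lam ^ 2 / (s:ℝ) ^ 2))⁻¹ - 1) := by
        unfold termVal; ring
    _ ≤ 1 + ((s:ℝ)/d) ^ 2 * ((16/15) * τ ^ 2) := by
        have := mul_le_mul_of_nonneg_left (sub_le_sub_right hI 1) hp0
        rw [hw_def] at this
        linarith
    _ ≤ Real.exp (((s:ℝ)/d) ^ 2 * ((16/15) * τ ^ 2)) := by
        have := Real.add_one_le_exp (((s:ℝ)/d) ^ 2 * ((16/15) * τ ^ 2))
        linarith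

lemma C2_ge {c : ℝ} (hc : 1 < c) : (32:ℝ)/9 ≤ 2 * c ^ 3 / Real.sqrt (c ^ 2 - 1) := by
  have h1 : (0:ℝ) < c ^ 2 - 1 := by nlinarith
  have hs0 : 0 < Real.sqrt (c ^ 2 - 1) := Real.sqrt_pos.2 h1
  rw [le_div_iff₀ hs0]
  have hle : Real.sqrt (c ^ 2 - 1) ≤ (9/16) * c ^ 3 := by
    rw [show (9:ℝ)/16 * c ^ 3 = Real.sqrt (((9/16) * c ^ 3) ^ 2) from
      (Real.sqrt_sq (by positivity)).symm]
    apply Real.sqrt_le_sqrt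
    nlinarith [sq_nonneg (9*c^3 - 16*c), sq_nonneg (3*c^2 - 8/3), sq_nonneg c, sq_nonneg (c^2-1)]
  nlinarith [hle, hs0]


end Stmt6Aux

set_option maxHeartbeats 1000000 in
theorem stmt6 {Ω : Type*} [MeasurableSpace Ω] (μ : Measure Ω) [IsProbabilityMeasure μ]
    (s d : ℕ) (hs : 1 ≤ s) (hsd : s ≤ d)
    (a b : Ω → Fin d → ℝ)
    (ha : ∀ ℓ, Measure.map (fun ω => a ω ℓ) μ = sparseGaussianMix s d)
    (hb : ∀ ℓ, Measure.map (fun ω => b ω ℓ) μ = sparseGaussianMix s d)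
    (hindep : iIndepFun
      (Sum.elim (fun (ℓ : Fin d) ω => a ω ℓ) (fun (ℓ : Fin d) ω => b ω ℓ)) μ)
    (c C t : ℝ) (hc : 1 < c) (hC : 0 < C)
    (hC2 : C ^ 2 = 2 * c ^ 3 / Real.sqrt (c ^ 2 - 1)) (ht : 0 ≤ t) :
    (t ≤ C ^ 2 * s / d →
      (μ {ω | t ≤ |∑ ℓ, a ω ℓ * b ω ℓ|}).toReal ≤
        2 * Real.exp (-(d : ℝ) * t ^ 2 / (2 * C ^ 2))) ∧
    (C ^ 2 * s / d < t →
      (μ {ω | t ≤ |∑ ℓ, a ω ℓ * b ω ℓ|}).toReal ≤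
        2 * Real.exp (-(s : ℝ) * t / 2)) := by
  classical
  have hd1 : 1 ≤ d := le_trans hs hsd
  have hsR : (1:ℝ) ≤ (s:ℝ) := by exact_mod_cast hs
  have hsR0 : (0:ℝ) < s := by linarith
  have hdR : (0:ℝ) < d := by exact_mod_cast Nat.lt_of_lt_of_le Nat.zero_lt_one hd1
  have hsdR : (s:ℝ) ≤ d := by exact_mod_cast hsd
  have hC2pos : (0:ℝ) < C ^ 2 := by positivity
  have hC2ge : (32:ℝ)/9 ≤ C ^ 2 := by rw [hC2]; exact Stmt6Aux.C2_ge hc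
  haveI hProbMix : IsProbabilityMeasure (sparseGaussianMix s d) := Stmt6Aux.isProb_mix hs hsd
  have hνne : sparseGaussianMix s d ≠ 0 := by
    intro h
    have h1 := Stmt6Aux.mix_univ (s := s) (d := d) hs hsd
    rw [h] at h1
    simp at h1
  have haem : ∀ ℓ : Fin d, AEMeasurable (fun ω => a ω ℓ) μ := by
    intro ℓ; by_contra h
    have h1 := ha ℓ
    rw [Measure.map_of_not_aemeasurable h] at h1
    exact hνne h1.symm
  have hbem : ∀ ℓ : Fin d, AEMeasurable (fun ω => b ω ℓ) μ := by
    intro ℓ; by_contra h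
    have h1 := hb ℓ
    rw [Measure.map_of_not_aemeasurable h] at h1
    exact hνne h1.symm
  set A : Fin d → Ω → ℝ := fun ℓ => (haem ℓ).mk _ with hA_def
  set B : Fin d → Ω → ℝ := fun ℓ => (hbem ℓ).mk _ with hB_def
  have hAmeas : ∀ ℓ, Measurable (A ℓ) := fun ℓ => (haem ℓ).measurable_mk
  have hBmeas : ∀ ℓ, Measurable (B ℓ) := fun ℓ => (hbem ℓ).measurable_mk
  have hAeq : ∀ ℓ, (fun ω => a ω ℓ) =ᵐ[μ] A ℓ := fun ℓ => (haem ℓ).ae_eq_mk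
  have hBeq : ∀ ℓ, (fun ω => b ω ℓ) =ᵐ[μ] B ℓ := fun ℓ => (hbem ℓ).ae_eq_mk
  have hmapA : ∀ ℓ, μ.map (A ℓ) = sparseGaussianMix s d := fun ℓ => by
    rw [← Measure.map_congr (hAeq ℓ), ha ℓ]
  have hmapB : ∀ ℓ, μ.map (B ℓ) = sparseGaussianMix s d := fun ℓ => by
    rw [← Measure.map_congr (hBeq ℓ), hb ℓ]
  set X : (Fin d) ⊕ (Fin d) → Ω → ℝ := Sum.elim A B with hX_def
  have hXmeas : ∀ i, Measurable (X i) := by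
    rintro (ℓ | ℓ)
    exacts [hAmeas ℓ, hBmeas ℓ]
  have hindep' : iIndepFun X μ := by
    refine Stmt6Aux.iIndepFun_ae_congr ?_ hindep
    rintro (ℓ | ℓ)
    · exact hAeq ℓ
    · exact hBeq ℓ
  set Y : Fin d → Ω → ℝ := fun ℓ ω => A ℓ ω * B ℓ ω with hY_def
  have hYind : ∀ (T : Finset (Fin d)) (k : Fin d), k ∉ T →
      IndepFun (fun ω => ∑ ℓ ∈ T, Y ℓ ω) (Y k) μ := by
    intro T k hk
    have hdisj : Disjoint (T.disjSum T) (({k} : Finset (Fin d)).disjSum {k}) := by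
      rw [Finset.disjoint_left]
      rintro (x | x) hx hx' <;>
        simp only [Finset.inl_mem_disjSum, Finset.inr_mem_disjSum,
          Finset.mem_singleton] at hx hx' <;>
        exact hk (hx' ▸ hx)
    have h := hindep'.indepFun_finset (T.disjSum T) (({k} : Finset (Fin d)).disjSum {k})
      hdisj hXmeas
    have hg1 : Measurable (fun v : (↥(T.disjSum T)) → ℝ =>
        ∑ ℓ ∈ T.attach, v ⟨Sum.inl ℓ.1, Finset.inl_mem_disjSum.2 ℓ.2⟩ *
          v ⟨Sum.inr ℓ.1, Finset.inr_mem_disjSum.2 ℓ.2⟩) := by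
      apply Finset.measurable_sum
      intro ℓ _
      exact (measurable_pi_apply _).mul (measurable_pi_apply _)
    have hg2 : Measurable (fun v : (↥((({k} : Finset (Fin d)).disjSum {k}))) → ℝ =>
        v ⟨Sum.inl k, Finset.inl_mem_disjSum.2 (Finset.mem_singleton_self k)⟩ *
          v ⟨Sum.inr k, Finset.inr_mem_disjSum.2 (Finset.mem_singleton_self k)⟩) :=
      (measurable_pi_apply _).mul (measurable_pi_apply _)
    have h2 := h.comp hg1 hg2
    convert h2 using 1
    · funext ω
      exact (Finset.sum_attach T (fun ℓ => Y ℓ ω)).symm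
    · rfl
  have main : ∀ τ : ℝ, 0 ≤ τ → τ ≤ 1 →
      (μ {ω | t ≤ |∑ ℓ, a ω ℓ * b ω ℓ|}).toReal ≤
        2 * Real.exp (-(4/5*τ*(s:ℝ)*t) + (16/15)*((s:ℝ)^2/d)*τ^2) := by
    intro τ hτ0 hτ1
    set lam : ℝ := 4/5*τ*(s:ℝ) with hlam_def
    have hlam0 : 0 ≤ lam := by positivity
    have hlamsq : lam^2 = (16/25)*τ^2*(s:ℝ)^2 := by rw [hlam_def]; ring
    have tailbound : ∀ σ : ℝ, σ^2 = 1 →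
        (μ {ω | t ≤ ∑ ℓ, σ * Y ℓ ω}).toReal ≤
          Real.exp (-(lam*t) + (16/15)*((s:ℝ)^2/d)*τ^2) := by
      intro σ hσ
      have hσlam : (lam*σ)^2 = (16/25)*τ^2*(s:ℝ)^2 := by
        rw [mul_pow, hσ, mul_one, hlamsq]
      have hσlam16 : (lam*σ)^2 ≤ (16/25)*(s:ℝ)^2 := by
        rw [hσlam]
        nlinarith [mul_nonneg (sub_nonneg.2 (show τ^2 ≤ 1 by nlinarith)) (sq_nonneg (s:ℝ))]
      have hterm : ∀ k : Fin d, Integrable (fun ω => Real.exp (lam * (σ * Y k ω))) μ ∧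
          ∫ ω, Real.exp (lam * (σ * Y k ω)) ∂μ = Stmt6Aux.termVal s d (lam*σ) := by
        intro k
        have hABi : IndepFun (A k) (B k) μ :=
          hindep'.indepFun (i := Sum.inl k) (j := Sum.inr k) (by simp)
        have heq : (fun ω => Real.exp (lam * (σ * Y k ω))) =
            fun ω => Real.exp ((lam*σ) * (A k ω * B k ω)) := by
          funext ω
          rw [hY_def]
          ring_nf
        have h := Stmt6Aux.term_integral hs hsd (hAmeas k) (hBmeas k) (hmapA k) (hmapB k)
          hABi (lam*σ) hσlam16
        rw [heq]
        exact h
      have key : ∀ T : Finset (Fin d),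
          Integrable (fun ω => Real.exp (lam * ∑ ℓ ∈ T, σ * Y ℓ ω)) μ ∧
          ∫ ω, Real.exp (lam * ∑ ℓ ∈ T, σ * Y ℓ ω) ∂μ =
            Stmt6Aux.termVal s d (lam*σ) ^ T.card := by
        intro T
        induction T using Finset.induction_on with
        | empty => simp
        | @insert k T hk ih =>
          have hFG : IndepFun (fun ω => σ * Y k ω) (fun ω => ∑ ℓ ∈ T, σ * Y ℓ ω) μ := by
            have h := ((hYind T k hk).symm.comp (measurable_const_mul σ)
              (measurable_const_mul σ))
            convert h using 1
            funext ω
            simp only [Function.comp_apply]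
            simp only [Function.comp_def, Finset.mul_sum]
          simp only [Finset.sum_insert hk]
          have hadd : Integrable
              (fun ω => Real.exp (lam * (σ * Y k ω + ∑ ℓ ∈ T, σ * Y ℓ ω))) μ :=
            hFG.integrable_exp_mul_add (hterm k).1 ih.1
          refine ⟨hadd, ?_⟩
          have hmul := (hFG.exp_mul lam lam).integral_fun_mul_eq_mul_integral (hterm k).1.aestronglyMeasurable ih.1.aestronglyMeasurable
          calc ∫ ω, Real.exp (lam * (σ * Y k ω + ∑ ℓ ∈ T, σ * Y ℓ ω)) ∂μ
              = ∫ ω, Real.exp (lam * (σ * Y k ω)) *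
                  Real.exp (lam * ∑ ℓ ∈ T, σ * Y ℓ ω) ∂μ := by
                congr 1
                funext ω
                rw [← Real.exp_add, mul_add]
            _ = (∫ ω, Real.exp (lam * (σ * Y k ω)) ∂μ) *
                  ∫ ω, Real.exp (lam * ∑ ℓ ∈ T, σ * Y ℓ ω) ∂μ := hmul
            _ = Stmt6Aux.termVal s d (lam*σ) ^ (insert k T).card := by
                rw [(hterm k).2, ih.2, Finset.card_insert_of_notMem hk, pow_succ]
                ring
      have hcher := measure_ge_le_exp_mul_mgf (μ := μ)
        (X := fun ω => ∑ ℓ, σ * Y ℓ ω) (t := lam) t hlam0 (key Finset.univ).1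
      have hmgf : mgf (fun ω => ∑ ℓ, σ * Y ℓ ω) μ lam =
          Stmt6Aux.termVal s d (lam*σ) ^ d := by
        rw [mgf, (key Finset.univ).2, Finset.card_univ, Fintype.card_fin]
      have hbd : Stmt6Aux.termVal s d (lam*σ) ≤
          Real.exp (((s:ℝ)/d)^2 * ((16/15)*τ^2)) :=
        Stmt6Aux.termVal_le hs hsd τ hτ0 hτ1 (lam*σ) hσlam
      have h0R : 0 ≤ Stmt6Aux.termVal s d (lam*σ) := Stmt6Aux.termVal_nonneg hs hsd _
      have hpow : Stmt6Aux.termVal s d (lam*σ) ^ d ≤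
          Real.exp (((s:ℝ)/d)^2*((16/15)*τ^2)) ^ d := pow_le_pow_left₀ h0R hbd d
      have hexpd : Real.exp (((s:ℝ)/d)^2*((16/15)*τ^2)) ^ d =
          Real.exp ((16/15)*((s:ℝ)^2/d)*τ^2) := by
        rw [← Real.exp_nat_mul]
        congr 1
        field_simp
      calc (μ {ω | t ≤ ∑ ℓ, σ * Y ℓ ω}).toReal
          ≤ Real.exp (-lam * t) * mgf (fun ω => ∑ ℓ, σ * Y ℓ ω) μ lam := hcher
        _ ≤ Real.exp (-lam * t) * Real.exp ((16/15)*((s:ℝ)^2/d)*τ^2) := by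
            rw [hmgf]
            refine mul_le_mul_of_nonneg_left ?_ (Real.exp_pos _).le
            rw [← hexpd]
            exact hpow
        _ = Real.exp (-(lam*t) + (16/15)*((s:ℝ)^2/d)*τ^2) := by
            rw [← Real.exp_add]
            ring_nf
    have hEv : μ {ω | t ≤ |∑ ℓ, a ω ℓ * b ω ℓ|} = μ {ω | t ≤ |∑ ℓ, Y ℓ ω|} := by
      apply measure_congr
      rw [Filter.eventuallyEq_set]
      have h1 : ∀ᵐ ω ∂μ, ∀ ℓ, a ω ℓ = A ℓ ω := (MeasureTheory.ae_all_iff).2 hAeq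
      have h2 : ∀ᵐ ω ∂μ, ∀ ℓ, b ω ℓ = B ℓ ω := (MeasureTheory.ae_all_iff).2 hBeq
      filter_upwards [h1, h2] with ω hω1 hω2
      have hsum : ∑ ℓ, a ω ℓ * b ω ℓ = ∑ ℓ, Y ℓ ω :=
        Finset.sum_congr rfl (fun ℓ _ => by rw [hω1 ℓ, hω2 ℓ])
      change (t ≤ |∑ ℓ, a ω ℓ * b ω ℓ|) ↔ (t ≤ |∑ ℓ, Y ℓ ω|)
      rw [hsum]
    have hUnion : μ {ω | t ≤ |∑ ℓ, Y ℓ ω|} ≤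
        μ {ω | t ≤ ∑ ℓ, (1:ℝ) * Y ℓ ω} + μ {ω | t ≤ ∑ ℓ, (-1:ℝ) * Y ℓ ω} := by
      refine le_trans (measure_mono ?_) (measure_union_le _ _)
      intro ω hω
      simp only [Set.mem_setOf_eq, Set.mem_union] at *
      rcases le_abs.1 hω with h | h
      · left
        simpa using h
      · right
        simp only [neg_one_mul]
        rw [Finset.sum_neg_distrib]
        exact h
    calc (μ {ω | t ≤ |∑ ℓ, a ω ℓ * b ω ℓ|}).toReal
        = (μ {ω | t ≤ |∑ ℓ, Y ℓ ω|}).toReal := by rw [hEv]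
      _ ≤ ((μ {ω | t ≤ ∑ ℓ, (1:ℝ) * Y ℓ ω}) +
            (μ {ω | t ≤ ∑ ℓ, (-1:ℝ) * Y ℓ ω})).toReal :=
          ENNReal.toReal_mono
            (ENNReal.add_ne_top.2 ⟨measure_ne_top μ _, measure_ne_top μ _⟩) hUnion
      _ = (μ {ω | t ≤ ∑ ℓ, (1:ℝ) * Y ℓ ω}).toReal +
            (μ {ω | t ≤ ∑ ℓ, (-1:ℝ) * Y ℓ ω}).toReal :=
          ENNReal.toReal_add (measure_ne_top μ _) (measure_ne_top μ _)
      _ ≤ Real.exp (-(lam*t) + (16/15)*((s:ℝ)^2/d)*τ^2) +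
            Real.exp (-(lam*t) + (16/15)*((s:ℝ)^2/d)*τ^2) :=
          add_le_add (tailbound 1 (by norm_num)) (tailbound (-1) (by norm_num))
      _ = 2 * Real.exp (-(4/5*τ*(s:ℝ)*t) + (16/15)*((s:ℝ)^2/d)*τ^2) := by
          rw [hlam_def]
          ring
  constructor
  · intro hcase
    set τ : ℝ := t*d/(C^2*(s:ℝ)) with hτ_def
    have hτ0 : 0 ≤ τ := by positivity
    have hτ1 : τ ≤ 1 := by
      rw [hτ_def, div_le_one (by positivity)]
      rw [le_div_iff₀ hdR] at hcase
      linarith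
    refine le_trans (main τ hτ0 hτ1) ?_
    have hexp : -(4/5*τ*(s:ℝ)*t) + (16/15)*((s:ℝ)^2/d)*τ^2 ≤
        -(d:ℝ) * t ^ 2 / (2 * C ^ 2) := by
      set z : ℝ := (C^2)⁻¹ with hz_def
      have hz0 : 0 ≤ z := by positivity
      have hz32 : z ≤ 9/32 := by
        rw [hz_def]
        calc (C^2)⁻¹ ≤ ((32:ℝ)/9)⁻¹ := inv_anti₀ (by norm_num) hC2ge
          _ = 9/32 := by norm_num
      have e1 : 4/5*τ*(s:ℝ)*t = 4/5*((d:ℝ)*t^2)*z := by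
        rw [hτ_def, hz_def]
        field_simp
      have e2 : (16/15)*((s:ℝ)^2/d)*τ^2 = 16/15*((d:ℝ)*t^2)*(z*z) := by
        rw [hτ_def, hz_def]
        field_simp
      have e3 : -(d:ℝ) * t ^ 2 / (2 * C ^ 2) = -(1/2)*((d:ℝ)*t^2)*z := by
        rw [hz_def]
        field_simp
      rw [e1, e2, e3]
      have hw : 0 ≤ (d:ℝ)*t^2 := by positivity
      nlinarith [mul_le_mul_of_nonneg_left hz32 (mul_nonneg hw hz0),
        mul_nonneg (mul_nonneg hw hz0) hz0]
    have := Real.exp_le_exp.2 hexp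
    linarith
  · intro hcase
    refine le_trans (main 1 zero_le_one le_rfl) ?_
    have ht0 : 0 < t := lt_of_le_of_lt (by positivity) hcase
    have h2 : (s:ℝ)^2*C^2 < s*t*d := by
      have := (div_lt_iff₀ hdR).1 hcase
      nlinarith
    have hfin : (16/15)*((s:ℝ)^2/d) ≤ (3/10)*((s:ℝ)*t) := by
      have hkey : (16/15)*(s:ℝ)^2 ≤ (3/10)*((s:ℝ)*t)*d := by
        nlinarith [h2, mul_nonneg (sq_nonneg (s:ℝ)) (sub_nonneg.2 hC2ge)]
      calc (16/15)*((s:ℝ)^2/d) = ((16/15)*(s:ℝ)^2)/d := by ring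
        _ ≤ ((3/10)*((s:ℝ)*t)*d)/d := by gcongr
        _ = (3/10)*((s:ℝ)*t) := by field_simp
    have hexp : -(4/5*1*(s:ℝ)*t) + (16/15)*((s:ℝ)^2/d)*1^2 ≤ -(s:ℝ) * t / 2 := by
      nlinarith [hfin]
    have := Real.exp_le_exp.2 hexp
    linarith
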